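/- Let 𝔞 be a Lie subalgebra of the free 2-step nilpotent Lie algebra 𝔤 = 𝕂^r ⊕ Λ²𝕂^r, and suppose the projection of 𝔞 to 𝕂^r has dimension k ≥ 2. Then the Lie subalgebra generated by any linear complement of 𝔞 ∩ Λ²𝕂^r in 𝔞 is isomorphic to the free 2-step nilpotent Lie algebra of rank k. -/

import Mathlib

/-- The free 2-step nilpotent Lie algebra of rank `r`: `𝕂^r ⊕ Λ²𝕂^r`, where
`Λ²𝕂^r` is modeled by coordinates indexed by pairs `i < j`. -/
abbrev FreeNilp2 (K : Type) [Field K] (r : ℕ) : Type :=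
  (Fin r → K) × ({p : Fin r × Fin r // p.1 < p.2} → K)

/-- The wedge `x ∧ y` in coordinates. -/
def wedge {K : Type} [Field K] {r : ℕ} (x y : Fin r → K) :
    {p : Fin r × Fin r // p.1 < p.2} → K :=
  fun p => x p.1.1 * y p.1.2 - x p.1.2 * y p.1.1

noncomputable instance (K : Type) [Field K] (r : ℕ) : LieRing (FreeNilp2 K r) where
  bracket a b := (0, wedge a.1 b.1)
  add_lie a b c := by
    refine Prod.ext (by simp) (funext fun p => ?_)
    show wedge (a.1 + b.1) c.1 p = wedge a.1 c.1 p + wedge b.1 c.1 p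
    simp [wedge]; ring
  lie_add a b c := by
    refine Prod.ext (by simp) (funext fun p => ?_)
    show wedge a.1 (b.1 + c.1) p = wedge a.1 b.1 p + wedge a.1 c.1 p
    simp [wedge]; ring
  lie_self a := by
    refine Prod.ext (by simp) (funext fun p => ?_)
    show wedge a.1 a.1 p = 0
    simp [wedge]; ring
  leibniz_lie a b c := by
    refine Prod.ext (by simp) (funext fun p => ?_)
    show wedge a.1 (0 : Fin r → K) p =
      wedge (0 : Fin r → K) c.1 p + wedge b.1 (0 : Fin r → K) p
    simp [wedge]

noncomputable instance (K : Type) [Field K] (r : ℕ) : LieAlgebra K (FreeNilp2 K r) where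
  lie_smul t a b := by
    refine Prod.ext (by show (0 : Fin r → K) = t • (0 : Fin r → K); simp) (funext fun p => ?_)
    show wedge a.1 (t • b.1) p = t * wedge a.1 b.1 p
    simp [wedge]; ring


open Finset in
lemma key_sum {K : Type} [Field K] [CharZero K] {n : ℕ} (x y : Fin n → K)
    (M : Fin n → Fin n → K) (hM : ∀ i j, M j i = -M i j) :
    ∑ i, ∑ j, x i * y j * M i j
      = ∑ p : {p : Fin n × Fin n // p.1 < p.2},
          (x p.1.1 * y p.1.2 - x p.1.2 * y p.1.1) * M p.1.1 p.1.2 := by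
  have hMd : ∀ i, M i i = 0 := by
    intro i
    have h := hM i i
    have h2 : (2 : K) * M i i = 0 := by linear_combination h
    rcases mul_eq_zero.mp h2 with h' | h'
    · exact absurd h' two_ne_zero
    · exact h'
  set T : Fin n × Fin n → K := fun q => x q.1 * y q.2 * M q.1 q.2 with hT
  have h0 : ∑ i, ∑ j, x i * y j * M i j = ∑ q : Fin n × Fin n, T q := by
    rw [Fintype.sum_prod_type]
  rw [h0]
  rw [← Finset.sum_filter_add_sum_filter_not Finset.univ (fun q : Fin n × Fin n => q.1 < q.2) T]
  have h1 : ∑ q ∈ Finset.univ.filter (fun q : Fin n × Fin n => ¬ q.1 < q.2), T q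
      = ∑ q ∈ Finset.univ.filter (fun q : Fin n × Fin n => q.1 < q.2),
          (- (x q.2 * y q.1 * M q.1 q.2)) := by
    rw [← Finset.sum_filter_add_sum_filter_not
      (Finset.univ.filter (fun q : Fin n × Fin n => ¬ q.1 < q.2)) (fun q => q.2 < q.1) T]
    have hz : ∑ q ∈ (Finset.univ.filter (fun q : Fin n × Fin n => ¬ q.1 < q.2)).filter
        (fun q => ¬ q.2 < q.1), T q = 0 := by
      apply Finset.sum_eq_zero
      intro q hq
      simp only [Finset.mem_filter] at hq
      have : q.1 = q.2 := le_antisymm (not_lt.mp hq.2) (not_lt.mp hq.1.2)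
      simp [hT, ← this, hMd]
    rw [hz, add_zero]
    apply Finset.sum_nbij' (fun q => Prod.swap q) (fun q => Prod.swap q)
    · intro a ha; simp only [Finset.mem_filter] at ha ⊢; exact ⟨Finset.mem_univ _, ha.2⟩
    · intro a ha; simp only [Finset.mem_filter] at ha ⊢
      exact ⟨⟨Finset.mem_univ _, not_lt.mpr (le_of_lt ha.2)⟩, ha.2⟩
    · intro a _; simp
    · intro a _; simp
    · intro q hq
      simp only [hT, Prod.swap]
      rw [hM q.2 q.1]
      ring
  rw [h1, ← Finset.sum_add_distrib]
  have h2 : ∀ q ∈ Finset.univ.filter (fun q : Fin n × Fin n => q.1 < q.2),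
      T q + - (x q.2 * y q.1 * M q.1 q.2) = (x q.1 * y q.2 - x q.2 * y q.1) * M q.1 q.2 := by
    intro q _; simp only [hT]; ring
  rw [Finset.sum_congr rfl h2]
  exact Finset.sum_subtype _ (fun q => by simp) _

-- wedge of linear combinations
lemma wedge_sum {K : Type} [Field K] [CharZero K] {r k : ℕ}
    (v : Fin k → (Fin r → K)) (a b : Fin k → K) :
    wedge (∑ i, a i • v i) (∑ j, b j • v j)
      = ∑ p : {p : Fin k × Fin k // p.1 < p.2}, wedge a b p • wedge (v p.1.1) (v p.1.2) := by
  funext c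
  have hM : ∀ i j : Fin k, wedge (v j) (v i) c = - wedge (v i) (v j) c := by
    intro i j; simp only [wedge]; ring
  have expand : ∀ t : Fin r, (∑ i, a i • v i) t = ∑ i, a i * v i t := by
    intro t; rw [Finset.sum_apply]; simp
  have expb : ∀ t : Fin r, (∑ j, b j • v j) t = ∑ j, b j * v j t := by
    intro t; rw [Finset.sum_apply]; simp
  have lhs : wedge (∑ i, a i • v i) (∑ j, b j • v j) c
      = ∑ i, ∑ j, a i * b j * wedge (v i) (v j) c := by
    simp only [wedge, expand, expb]
    rw [Finset.sum_mul_sum, Finset.sum_mul_sum, ← Finset.sum_sub_distrib]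
    refine Finset.sum_congr rfl fun i _ => ?_
    rw [← Finset.sum_sub_distrib]
    refine Finset.sum_congr rfl fun j _ => ?_
    ring
  rw [lhs, key_sum a b _ hM, Finset.sum_apply]
  refine Finset.sum_congr rfl fun p _ => ?_
  simp only [wedge, Pi.smul_apply, smul_eq_mul]

-- functoriality of Λ² applied to a wedge
lemma lambda_wedge {K : Type} [Field K] [CharZero K] {r k : ℕ}
    (A : Fin k → Fin r → K) (x y : Fin r → K) (c : {p : Fin k × Fin k // p.1 < p.2}) :
    ∑ p : {p : Fin r × Fin r // p.1 < p.2},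
        (A c.1.1 p.1.1 * A c.1.2 p.1.2 - A c.1.1 p.1.2 * A c.1.2 p.1.1) * wedge x y p
      = (∑ j, x j * A c.1.1 j) * (∑ j, y j * A c.1.2 j)
        - (∑ j, x j * A c.1.2 j) * (∑ j, y j * A c.1.1 j) := by
  have hM : ∀ i j : Fin r,
      A c.1.1 j * A c.1.2 i - A c.1.1 i * A c.1.2 j
        = -(A c.1.1 i * A c.1.2 j - A c.1.1 j * A c.1.2 i) := by intro i j; ring
  have key := key_sum x y (fun i j => A c.1.1 i * A c.1.2 j - A c.1.1 j * A c.1.2 i) hM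
  have rhs : (∑ j, x j * A c.1.1 j) * (∑ j, y j * A c.1.2 j)
        - (∑ j, x j * A c.1.2 j) * (∑ j, y j * A c.1.1 j)
      = ∑ i, ∑ j, x i * y j * (A c.1.1 i * A c.1.2 j - A c.1.1 j * A c.1.2 i) := by
    rw [Finset.sum_mul_sum, Finset.sum_mul_sum, ← Finset.sum_sub_distrib]
    refine Finset.sum_congr rfl fun i _ => ?_
    rw [← Finset.sum_sub_distrib]
    refine Finset.sum_congr rfl fun j _ => ?_
    ring
  rw [rhs, key]
  refine Finset.sum_congr rfl fun p _ => ?_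
  simp only [wedge]; ring
/-- If `𝔞` is a Lie subalgebra of the free 2-step nilpotent Lie algebra of rank
`r` whose projection to `𝕂^r` has dimension `k ≥ 2`, then the Lie subalgebra
generated by any linear complement `W` of `𝔞 ∩ Λ²𝕂^r` in `𝔞` is isomorphic to
the free 2-step nilpotent Lie algebra of rank `k`. -/
theorem subalgebra_complement_free (K : Type) [Field K] [CharZero K] (r k : ℕ)
    (hk : 2 ≤ k) (𝔞 : LieSubalgebra K (FreeNilp2 K r))
    (hproj : Module.finrank K
      (Submodule.map
        (LinearMap.fst K (Fin r → K) ({p : Fin r × Fin r // p.1 < p.2} → K))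
        𝔞.toSubmodule) = k)
    (W : Submodule K (FreeNilp2 K r)) (hW : W ≤ 𝔞.toSubmodule)
    (hdisj : W ⊓ (𝔞.toSubmodule ⊓
      LinearMap.ker (LinearMap.fst K (Fin r → K) ({p : Fin r × Fin r // p.1 < p.2} → K))) = ⊥)
    (hsup : W ⊔ (𝔞.toSubmodule ⊓
      LinearMap.ker (LinearMap.fst K (Fin r → K) ({p : Fin r × Fin r // p.1 < p.2} → K))) = 𝔞.toSubmodule) :
    Nonempty
      ((LieSubalgebra.lieSpan K (FreeNilp2 K r) (W : Set (FreeNilp2 K r))) ≃ₗ⁅K⁆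
        FreeNilp2 K k) := by
  classical
  set F := LinearMap.fst K (Fin r → K) ({p : Fin r × Fin r // p.1 < p.2} → K) with hF
  set V := Submodule.map F 𝔞.toSubmodule with hVdef
  -- basis of V
  let b : Module.Basis (Fin k) K V := Module.finBasisOfFinrankEq K V hproj
  let v : Fin k → (Fin r → K) := fun i => (b i : Fin r → K)
  have hv_li : LinearIndependent K v := b.linearIndependent.map' V.subtype V.ker_subtype
  -- the linear iso W ≃ V induced by F
  have hWV : ∀ w : W, F (w : FreeNilp2 K r) ∈ V := fun w =>
    ⟨(w : FreeNilp2 K r), hW w.2, rfl⟩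
  let fW : W →ₗ[K] V := LinearMap.codRestrict V (F.comp W.subtype) hWV
  have hfW_apply : ∀ u : W, (fW u : Fin r → K) = F (u : FreeNilp2 K r) := fun u => rfl
  have hfW_inj : Function.Injective fW := by
    intro u u' h
    have h1 : F ((u : FreeNilp2 K r) - u') = 0 := by
      have := congrArg (Subtype.val) h
      rw [hfW_apply, hfW_apply] at this
      rw [map_sub, this, sub_self]
    have h2 : ((u : FreeNilp2 K r) - u') ∈ W ⊓ (𝔞.toSubmodule ⊓ LinearMap.ker F) := by
      refine ⟨sub_mem u.2 u'.2, hW (sub_mem u.2 u'.2), h1⟩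
    rw [hdisj] at h2
    exact Subtype.ext (sub_eq_zero.mp h2)
  have hfW_surj : Function.Surjective fW := by
    rintro ⟨x, a, ha, rfl⟩
    obtain ⟨w0, hw0, z, hz, hwz⟩ := Submodule.mem_sup.mp (hsup ▸ ha)
    refine ⟨⟨w0, hw0⟩, Subtype.ext ?_⟩
    rw [hfW_apply]
    have hFz : F z = 0 := hz.2
    simp only [← hwz, map_add, hFz, add_zero]
  let e : W ≃ₗ[K] V := LinearEquiv.ofBijective fW ⟨hfW_inj, hfW_surj⟩
  let w : Fin k → FreeNilp2 K r := fun i => ((e.symm (b i) : W) : FreeNilp2 K r)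
  have hwW : ∀ i, w i ∈ W := fun i => (e.symm (b i)).2
  have hwv : ∀ i, (w i).1 = v i := by
    intro i
    have : fW (e.symm (b i)) = b i := e.apply_symm_apply (b i)
    have := congrArg Subtype.val this
    rw [hfW_apply] at this
    exact this
  -- the projection π : K^r → K^k with π (v i) = eᵢ
  obtain ⟨V', hV'⟩ := Submodule.exists_isCompl V
  let proj := V.linearProjOfIsCompl V' hV'
  let π : (Fin r → K) →ₗ[K] (Fin k → K) :=
    (b.equivFun.toLinearMap).comp proj
  have hπv : ∀ i j, π (v i) j = if i = j then 1 else 0 := by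
    intro i j
    have hp : proj (v i) = b i := Submodule.linearProjOfIsCompl_apply_left hV' (b i)
    show b.equivFun (proj (v i)) j = _
    rw [hp, b.equivFun_self]
  -- matrix of π
  let A : Fin k → Fin r → K := fun c j => π (fun t => if j = t then 1 else 0) c
  have hπ : ∀ (x : Fin r → K) (c : Fin k), π x c = ∑ j, x j * A c j := by
    intro x c
    conv_lhs => rw [pi_eq_sum_univ x, map_sum]
    rw [Finset.sum_apply]
    refine Finset.sum_congr rfl fun j _ => ?_
    rw [map_smul]
    simp [A, smul_eq_mul]
  -- Λ²π
  let L : ({p : Fin r × Fin r // p.1 < p.2} → K) →ₗ[K] ({p : Fin k × Fin k // p.1 < p.2} → K) :=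
    { toFun := fun ω c => ∑ p : {p : Fin r × Fin r // p.1 < p.2},
        (A c.1.1 p.1.1 * A c.1.2 p.1.2 - A c.1.1 p.1.2 * A c.1.2 p.1.1) * ω p
      map_add' := by
        intro ω η; funext c
        simp [mul_add, Finset.sum_add_distrib]
      map_smul' := by
        intro t ω; funext c
        simp only [Pi.smul_apply, smul_eq_mul, RingHom.id_apply, Finset.mul_sum]
        refine Finset.sum_congr rfl fun p _ => ?_
        ring }
  have hL : ∀ x y : Fin r → K, L (wedge x y) = wedge (π x) (π y) := by
    intro x y
    funext c
    show ∑ p : {p : Fin r × Fin r // p.1 < p.2},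
        (A c.1.1 p.1.1 * A c.1.2 p.1.2 - A c.1.1 p.1.2 * A c.1.2 p.1.1) * wedge x y p = _
    rw [lambda_wedge A x y c]
    simp only [wedge, hπ]
  have hwedge_single : ∀ p c : {q : Fin k × Fin k // q.1 < q.2},
      wedge (π (v p.1.1)) (π (v p.1.2)) c = if p = c then 1 else 0 := by
    rintro ⟨⟨p1, p2⟩, hp⟩ ⟨⟨c1, c2⟩, hc⟩
    simp only [wedge, hπv, Subtype.mk_eq_mk, Prod.mk.injEq]
    simp only [Fin.ext_iff, Fin.lt_def] at *
    split_ifs <;> (try ring) <;> (exfalso; omega)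
  -- the Lie algebra hom f
  let ω : {p : Fin k × Fin k // p.1 < p.2} → ({p : Fin r × Fin r // p.1 < p.2} → K) :=
    fun p => wedge (v p.1.1) (v p.1.2)
  let flin : FreeNilp2 K k →ₗ[K] FreeNilp2 K r :=
    ((Fintype.linearCombination K w).comp
        (LinearMap.fst K (Fin k → K) ({p : Fin k × Fin k // p.1 < p.2} → K)))
      + (LinearMap.inr K (Fin r → K) ({p : Fin r × Fin r // p.1 < p.2} → K)).comp
          ((Fintype.linearCombination K ω).comp
            (LinearMap.snd K (Fin k → K) ({p : Fin k × Fin k // p.1 < p.2} → K)))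
  have hflin : ∀ z : FreeNilp2 K k,
      flin z = (∑ i, z.1 i • w i) + (0, ∑ p, z.2 p • ω p) := by
    intro z; rfl
  have hfst : ∀ z : FreeNilp2 K k, (flin z).1 = ∑ i, z.1 i • v i := by
    intro z
    rw [hflin]
    show (∑ i, z.1 i • w i).1 + 0 = _
    rw [add_zero, Prod.fst_sum]
    refine Finset.sum_congr rfl fun i _ => ?_
    show z.1 i • (w i).1 = _
    rw [hwv]
  have hsnd : ∀ z : FreeNilp2 K k, (flin z).2 = (∑ i, z.1 i • w i).2 + ∑ p, z.2 p • ω p := by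
    intro z; rw [hflin]; rfl
  let f : FreeNilp2 K k →ₗ⁅K⁆ FreeNilp2 K r :=
    { flin with
      map_lie' := by
        intro z z'
        show flin (0, wedge z.1 z'.1) = (0, wedge (flin z).1 (flin z').1)
        rw [hflin]
        have h1 : (∑ i, (0 : Fin k → K) i • w i) = 0 := by simp
        rw [h1, zero_add]
        refine Prod.ext rfl ?_
        show ∑ p, wedge z.1 z'.1 p • ω p = wedge (flin z).1 (flin z').1
        rw [hfst, hfst, wedge_sum] }
  have hf_apply : ∀ z, f z = flin z := fun z => rfl
  -- injectivity
  have hinj : Function.Injective f := by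
    intro z z' h
    rw [hf_apply, hf_apply] at h
    have h1 : (flin z).1 = (flin z').1 := by rw [h]
    rw [hfst, hfst] at h1
    have hsub : ∑ i, (z.1 i - z'.1 i) • v i = 0 := by
      simp only [sub_smul, Finset.sum_sub_distrib, h1, sub_self]
    have hz1 : z.1 = z'.1 := by
      funext i
      have := Fintype.linearIndependent_iff.mp hv_li (fun i => z.1 i - z'.1 i) hsub i
      exact sub_eq_zero.mp this
    have h2 : (flin z).2 = (flin z').2 := by rw [h]
    rw [hsnd, hsnd, hz1] at h2
    have h3 : ∑ p, z.2 p • ω p = ∑ p, z'.2 p • ω p := by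
      exact add_left_cancel h2
    have hz2 : z.2 = z'.2 := by
      funext c
      have h4 := congrArg L h3
      rw [map_sum, map_sum] at h4
      simp only [map_smul] at h4
      have h5 : ∀ p : {q : Fin k × Fin k // q.1 < q.2}, L (ω p) = wedge (π (v p.1.1)) (π (v p.1.2)) :=
        fun p => hL _ _
      simp only [h5] at h4
      have h6 := congrFun h4 c
      rw [Finset.sum_apply, Finset.sum_apply] at h6
      simp only [Pi.smul_apply, smul_eq_mul, hwedge_single, mul_ite, mul_one, mul_zero] at h6
      rw [Finset.sum_ite_eq' Finset.univ c z.2, Finset.sum_ite_eq' Finset.univ c z'.2] at h6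
      simpa using h6
    exact Prod.ext hz1 hz2
  -- range = lieSpan W
  have hrange : f.range = LieSubalgebra.lieSpan K (FreeNilp2 K r) (W : Set (FreeNilp2 K r)) := by
    apply le_antisymm
    · rintro x ⟨z, rfl⟩
      show flin z ∈ (LieSubalgebra.lieSpan K (FreeNilp2 K r) (W : Set (FreeNilp2 K r))).toSubmodule
      rw [hflin]
      apply add_mem
      · exact Submodule.sum_mem _ fun i _ => Submodule.smul_mem _ _
          (LieSubalgebra.subset_lieSpan (hwW i))
      · have heq : ((0, ∑ p, z.2 p • ω p) : FreeNilp2 K r)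
            = ∑ p, z.2 p • ((0, ω p) : FreeNilp2 K r) := by
          refine Prod.ext ?_ ?_
          · rw [Prod.fst_sum]; simp
          · rw [Prod.snd_sum]; rfl
        rw [heq]
        refine Submodule.sum_mem _ fun p _ => Submodule.smul_mem _ _ ?_
        have hbr : ((0, ω p) : FreeNilp2 K r) = ⁅w p.1.1, w p.1.2⁆ := by
          show ((0, ω p) : FreeNilp2 K r) = (0, wedge (w p.1.1).1 (w p.1.2).1)
          rw [hwv, hwv]
        rw [hbr]
        exact LieSubalgebra.lie_mem _ (LieSubalgebra.subset_lieSpan (hwW p.1.1))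
          (LieSubalgebra.subset_lieSpan (hwW p.1.2))
    · rw [LieSubalgebra.lieSpan_le]
      intro x hx
      refine ⟨(b.equivFun (fW ⟨x, hx⟩), 0), ?_⟩
      show flin (b.equivFun (fW ⟨x, hx⟩), 0) = x
      rw [hflin]
      have h0 : (∑ p, (0 : {p : Fin k × Fin k // p.1 < p.2} → K) p • ω p) = 0 := by simp
      rw [h0]
      have : (∑ i, b.equivFun (fW ⟨x, hx⟩) i • w i) = x := by
        have hcoe : (∑ i, b.equivFun (fW ⟨x, hx⟩) i • w i)
            = ((∑ i, b.equivFun (fW ⟨x, hx⟩) i • e.symm (b i) : W) : FreeNilp2 K r) := by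
          rw [Submodule.coe_sum]
          rfl
        rw [hcoe]
        have : (∑ i, b.equivFun (fW ⟨x, hx⟩) i • e.symm (b i)) = (⟨x, hx⟩ : W) := by
          have hb : (∑ i, b.equivFun (fW ⟨x, hx⟩) i • b i) = fW ⟨x, hx⟩ := by
            conv_rhs => rw [← b.equivFun.symm_apply_apply (fW ⟨x, hx⟩)]
            rw [b.equivFun_symm_apply]
          calc (∑ i, b.equivFun (fW ⟨x, hx⟩) i • e.symm (b i))
              = ∑ i, e.symm.toLinearMap (b.equivFun (fW ⟨x, hx⟩) i • b i) := by
                refine Finset.sum_congr rfl fun i _ => ?_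
                rw [map_smul]
                rfl
            _ = e.symm.toLinearMap (∑ i, b.equivFun (fW ⟨x, hx⟩) i • b i) :=
                (map_sum _ _ _).symm
            _ = e.symm (fW ⟨x, hx⟩) := by rw [hb]; rfl
            _ = ⟨x, hx⟩ := e.symm_apply_apply _
        rw [this]
      rw [this]
      simp
  exact ⟨(LieEquiv.ofEq _ _ (by rw [hrange])).trans (LieEquiv.ofInjective f hinj).symm⟩
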